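/- In a vertex algebra V, the subspace C₂(V) spanned by all elements a_{(-2)}b (a, b ∈ V) is a two-sided ideal for the product a·b := a_{(-1)}b modulo C₂(V), and the quotient R_V = V/C₂(V) is a commutative associative algebra with unit given by the image of the vacuum vector. -/

import Mathlib

/-- A vertex algebra structure on a complex vector space `V`: modes `a_{(n)}` bilinear in
`a` and the argument, a vacuum vector, truncation, vacuum axioms, and the Borcherds
identity (whose two sides are finite sums, stabilizing for large cutoff `M`). -/
structure VertexAlgebra (V : Type) [AddCommGroup V] [Module ℂ V] where
  mode : V →ₗ[ℂ] ℤ → V →ₗ[ℂ] V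
  vac : V
  truncation : ∀ a b : V, ∃ N : ℤ, ∀ n ≥ N, mode a n b = 0
  vacuum_field : ∀ (n : ℤ) (b : V), mode vac n b = if n = -1 then b else 0
  creation_neg_one : ∀ a : V, mode a (-1) vac = a
  creation : ∀ (a : V) (n : ℤ), 0 ≤ n → mode a n vac = 0
  borcherds : ∀ (a b c : V) (p q t : ℤ), ∃ N : ℕ, ∀ M ≥ N,
    ∑ i ∈ Finset.range M,
        Ring.choose p i • mode (mode a (t + i) b) (p + q - i) c
      = ∑ i ∈ Finset.range M, ((-1 : ℤ) ^ i * Ring.choose t i) •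
          (mode a (p + t - i) (mode b (q + i) c)
            - (((-1 : ℤˣ) ^ t : ℤˣ) : ℤ) • mode b (q + t - i) (mode a (p + i) c))

namespace Stmt9Helpers

variable {V : Type} [AddCommGroup V] [Module ℂ V] (VA : VertexAlgebra V)

/-- The translation formula `(T a)_{(p-1)} = (1-p) a_{(p-2)}` where `T a = a_{(-2)}|0⟩`. -/
lemma Tmode (a c : V) (p : ℤ) :
    VA.mode (VA.mode a (-2) VA.vac) (p - 1) c = (1 - p) • VA.mode a (p - 2) c := by
  obtain ⟨N, hN⟩ := VA.borcherds a VA.vac c p (-1) (-2)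
  have h := hN (N + 2) (by omega)
  rw [← Finset.sum_subset (Finset.range_subset_range.2 (show 2 ≤ N + 2 by omega))
      (fun i _ hi => by
        rw [Finset.mem_range, not_lt] at hi
        rw [VA.creation a (-2 + i) (by omega)]
        simp)] at h
  rw [← Finset.sum_subset (Finset.range_subset_range.2 (show 1 ≤ N + 2 by omega))
      (fun i _ hi => by
        rw [Finset.mem_range, not_lt] at hi
        rw [VA.vacuum_field, if_neg (by omega), VA.vacuum_field, if_neg (by omega)]
        simp)] at h
  simp only [Finset.sum_range_succ, Finset.sum_range_one, Nat.cast_zero, Nat.cast_one,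
    Ring.choose_zero_right, Ring.choose_one_right, one_smul, pow_zero, one_mul,
    VA.creation_neg_one, VA.vacuum_field] at h
  norm_num at h
  rw [show p + -1 - 1 = p - 2 by ring, show p + -1 = p - 1 by ring,
    show p + -2 = p - 2 by ring, VA.creation_neg_one] at h
  rw [sub_smul, one_smul]
  exact eq_sub_of_add_eq h

end Stmt9Helpers

/-- Zhu's commutative algebra: in a vertex algebra `V`, the span `C₂(V)` of all elements
`a_{(-2)}b` is a two-sided ideal for the product `a·b = a_{(-1)}b`, and modulo `C₂(V)`
this product is commutative and associative with unit the image of the vacuum. -/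
theorem stmt9 (V : Type) [AddCommGroup V] [Module ℂ V] (VA : VertexAlgebra V)
    (C2 : Submodule ℂ V)
    (hC2 : C2 = Submodule.span ℂ {x | ∃ a b : V, x = VA.mode a (-2) b}) :
    (∀ a b : V, a ∈ C2 → VA.mode a (-1) b ∈ C2) ∧
    (∀ a b : V, b ∈ C2 → VA.mode a (-1) b ∈ C2) ∧
    (∀ a b : V, VA.mode a (-1) b - VA.mode b (-1) a ∈ C2) ∧
    (∀ a b c : V,
      VA.mode (VA.mode a (-1) b) (-1) c - VA.mode a (-1) (VA.mode b (-1) c) ∈ C2) ∧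
    (∀ a : V, VA.mode VA.vac (-1) a = a) := by
  have mem2 : ∀ a b : V, VA.mode a (-2) b ∈ C2 := fun a b =>
    hC2 ▸ Submodule.subset_span ⟨a, b, rfl⟩
  -- all modes with index ≤ -2 land in C₂
  have key : ∀ k : ℕ, ∀ a b : V, VA.mode a (-2 - k) b ∈ C2 := by
    intro k
    induction k with
    | zero => intro a b; simpa using mem2 a b
    | succ k ih =>
      intro a b
      have hT := Stmt9Helpers.Tmode VA a b (-1 - (k : ℤ))
      rw [show (-1 - (k:ℤ)) - 1 = -2 - k by ring, show (1 : ℤ) - (-1 - (k:ℤ)) = 2 + k by ring,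
        show (-1 - (k:ℤ)) - 2 = -2 - ((k+1 : ℕ) : ℤ) by push_cast; ring] at hT
      have hmem := ih (VA.mode a (-2) VA.vac) b
      rw [hT, ← Int.cast_smul_eq_zsmul ℂ] at hmem
      have h2 : ((2 + (k:ℤ) : ℤ) : ℂ) ≠ 0 := Int.cast_ne_zero.2 (by omega)
      have := C2.smul_mem ((2 + (k:ℤ) : ℤ) : ℂ)⁻¹ hmem
      rwa [inv_smul_smul₀ h2] at this
  have L : ∀ n : ℤ, n ≤ -2 → ∀ a b : V, VA.mode a n b ∈ C2 := by
    intro n hn a b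
    have h : n = -2 - ((-2 - n).toNat : ℤ) := by omega
    rw [h]; exact key _ a b
  refine ⟨?_, ?_, ?_, ?_, ?_⟩
  · -- left ideal
    intro a b ha
    rw [hC2] at ha
    induction ha using Submodule.span_induction with
    | mem x hx =>
      obtain ⟨u, w, rfl⟩ := hx
      obtain ⟨N, hN⟩ := VA.borcherds u w b 0 (-1) (-2)
      have h := hN (N + 1) (by omega)
      rw [← Finset.sum_subset (Finset.range_subset_range.2 (show 1 ≤ N + 1 by omega))
          (fun i _ hi => by
            rw [Finset.mem_range, not_lt] at hi
            rw [Ring.choose_zero_pos ℤ hi, zero_smul])] at h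
      simp only [Finset.sum_range_one, Nat.cast_zero, Ring.choose_zero_right, one_smul] at h
      norm_num at h
      rw [h]
      refine Submodule.sum_mem _ fun i _ => Submodule.smul_of_tower_mem _ _ ?_
      refine Submodule.sub_mem _ (L _ (by omega) _ _) ?_
      exact L _ (by omega) _ _
    | zero => simp only [map_zero, LinearMap.zero_apply, Pi.zero_apply]; exact C2.zero_mem
    | add x y hx hy ihx ihy =>
      simp only [map_add, LinearMap.add_apply, Pi.add_apply]
      exact C2.add_mem ihx ihy
    | smul r x hx ihx =>
      simp only [map_smul, LinearMap.smul_apply, Pi.smul_apply]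
      exact C2.smul_mem r ihx
  · -- right ideal
    intro a b hb
    rw [hC2] at hb
    induction hb using Submodule.span_induction with
    | mem x hx =>
      obtain ⟨u, w, rfl⟩ := hx
      obtain ⟨N, hN⟩ := VA.borcherds a u w (-1) (-2) 0
      have h := hN (N + 1) (by omega)
      rw [← Finset.sum_subset (Finset.range_subset_range.2 (show 1 ≤ N + 1 by omega))
          (fun i _ hi => by
            rw [Finset.mem_range, not_lt] at hi
            simp [Ring.choose_zero_pos ℤ hi]) (f := fun i =>
            ((-1 : ℤ) ^ i * Ring.choose (0:ℤ) i) •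
              (VA.mode a (-1 + 0 - i) (VA.mode u (-2 + i) w)
                - (((-1 : ℤˣ) ^ (0:ℤ) : ℤˣ) : ℤ) •
                    VA.mode u (-2 + 0 - i) (VA.mode a (-1 + i) w)))] at h
      simp only [Finset.sum_range_one, Nat.cast_zero, Ring.choose_zero_right, pow_zero,
        one_mul, one_smul] at h
      norm_num at h
      have h' := eq_add_of_sub_eq h.symm
      rw [h']
      refine C2.add_mem (Submodule.sum_mem _ fun i _ => Submodule.smul_of_tower_mem _ _
        (L _ (by omega) _ _)) (mem2 u _)
    | zero => rw [map_zero]; exact C2.zero_mem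
    | add x y hx hy ihx ihy => rw [map_add]; exact C2.add_mem ihx ihy
    | smul r x hx ihx => rw [map_smul]; exact C2.smul_mem r ihx
  · -- commutativity
    intro a b
    obtain ⟨N, hN⟩ := VA.borcherds a b VA.vac (-1) 0 (-1)
    have h := hN (N + 1) (by omega)
    rw [← Finset.sum_subset (Finset.range_subset_range.2 (show 1 ≤ N + 1 by omega))
        (fun i _ hi => by
          rw [Finset.mem_range, not_lt] at hi
          simp [VA.creation b (0 + (i:ℤ)) (by omega), VA.creation b (i:ℤ) (by omega),
            VA.creation a (-1 + (i:ℤ)) (by omega)])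
        (f := fun i => ((-1 : ℤ) ^ i * Ring.choose (-1:ℤ) i) •
          (VA.mode a (-1 + -1 - i) (VA.mode b (0 + i) VA.vac)
            - (((-1 : ℤˣ) ^ (-1:ℤ) : ℤˣ) : ℤ) •
                VA.mode b (0 + -1 - i) (VA.mode a (-1 + i) VA.vac)))] at h
    simp only [Finset.sum_range_one, Nat.cast_zero, Ring.choose_zero_right, pow_zero,
      one_mul, one_smul, VA.creation_neg_one, VA.creation b 0 le_rfl, map_zero] at h
    norm_num at h
    rw [Finset.sum_range_succ'] at h
    simp only [Nat.cast_zero, Ring.choose_zero_right, one_smul] at h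
    norm_num at h
    simp only [VA.creation b 0 le_rfl, map_zero, VA.creation_neg_one, zero_add] at h
    have hS : VA.mode b (-1) a - VA.mode a (-1) b ∈ C2 := by
      rw [← eq_sub_of_add_eq h]
      exact Submodule.sum_mem _ fun i _ => Submodule.smul_of_tower_mem _ _ (L _ (by omega) _ _)
    rw [← neg_sub]
    exact C2.neg_mem hS
  · -- associativity
    intro a b c
    obtain ⟨N, hN⟩ := VA.borcherds a b c 0 (-1) (-1)
    have h := hN (N + 1) (by omega)
    rw [← Finset.sum_subset (Finset.range_subset_range.2 (show 1 ≤ N + 1 by omega))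
        (fun i _ hi => by
          rw [Finset.mem_range, not_lt] at hi
          simp [Ring.choose_zero_pos ℤ hi])] at h
    simp only [Finset.sum_range_one, Nat.cast_zero, Ring.choose_zero_right, one_smul] at h
    norm_num at h
    rw [Finset.sum_range_succ'] at h
    simp only [Nat.cast_zero, Ring.choose_zero_right, pow_zero, one_mul, one_smul] at h
    norm_num at h
    have h2 : VA.mode (VA.mode a (-1) b) (-1) c - VA.mode a (-1) (VA.mode b (-1) c) =
        (∑ x ∈ Finset.range N,
            (((-1:ℤ) ^ (x + 1) * Ring.choose (-1:ℤ) (x + 1)) •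
                VA.mode a (-1 - ((x:ℤ) + 1)) (VA.mode b (x:ℤ) c) +
              ((-1:ℤ) ^ (x + 1) * Ring.choose (-1:ℤ) (x + 1)) •
                VA.mode b (-2 - ((x:ℤ) + 1)) (VA.mode a ((x:ℤ) + 1) c))) +
          VA.mode b (-2) (VA.mode a 0 c) := by
      rw [h]; abel
    rw [h2]
    exact C2.add_mem (Submodule.sum_mem _ fun i _ => C2.add_mem
      (Submodule.smul_of_tower_mem _ _ (L _ (by omega) _ _))
      (Submodule.smul_of_tower_mem _ _ (L _ (by omega) _ _))) (mem2 b _)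
  · intro a
    rw [VA.vacuum_field]; simp
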